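/- arXiv:1502.04201 — 4 statements merged into one kernel-verified Lean document; each statement's English description precedes it below -/
import Mathlib

section
/- For all a > 0, b ≥ 0, and t ∈ ℝ, the difference d(it) := cos(√(aτ² − b)) − cos(√a · τ) (the restriction of cosh(√(at²+b)) − cosh(√a t) to the imaginary axis t = iτ) satisfies |d(iτ)| ≤ 1 + cosh(b) for all τ ∈ ℝ and d(iτ) = O(1/|τ|) as τ → ±∞. -/
/-- `cos √x` understood as the entire function `∑ (−1)^k x^k/(2k)!`, which for `x < 0`
equals `cosh √(−x)`. -/
noncomputable def cosSqrt (x : ℝ) : ℝ :=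
  if 0 ≤ x then Real.cos (Real.sqrt x) else Real.cosh (Real.sqrt (-x))

theorem d_bounded_and_decay (a b : ℝ) (ha : 0 < a) (hb : 0 ≤ b) :
    (∀ τ : ℝ, |cosSqrt (a * τ ^ 2 - b) - Real.cos (Real.sqrt a * τ)| ≤ 1 + Real.cosh b) ∧
    (∃ C T : ℝ, ∀ τ : ℝ, T ≤ |τ| →
      |cosSqrt (a * τ ^ 2 - b) - Real.cos (Real.sqrt a * τ)| ≤ C / |τ|) := by
  have hcoshb : (1:ℝ) ≤ Real.cosh b := Real.one_le_cosh b
  constructor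
  · intro τ
    by_cases h : 0 ≤ a * τ ^ 2 - b
    · rw [cosSqrt, if_pos h]
      have h1 := Real.neg_one_le_cos (Real.sqrt (a * τ ^ 2 - b))
      have h2 := Real.cos_le_one (Real.sqrt (a * τ ^ 2 - b))
      have h3 := Real.neg_one_le_cos (Real.sqrt a * τ)
      have h4 := Real.cos_le_one (Real.sqrt a * τ)
      rw [abs_le]; constructor <;> linarith
    · rw [cosSqrt, if_neg h]
      push_neg at h
      set c : ℝ := -(a * τ ^ 2 - b) with hc
      have hc0 : 0 ≤ c := by simp only [hc]; linarith
      have hcb : c ≤ b := by nlinarith [sq_nonneg τ]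
      have hmono : Real.cosh (Real.sqrt c) ≤ Real.cosh (Real.sqrt b) := by
        rw [Real.cosh_le_cosh, abs_of_nonneg (Real.sqrt_nonneg _),
          abs_of_nonneg (Real.sqrt_nonneg _)]
        exact Real.sqrt_le_sqrt hcb
      have hch1 : 1 ≤ Real.cosh (Real.sqrt c) := Real.one_le_cosh _
      have h3 := Real.neg_one_le_cos (Real.sqrt a * τ)
      have h4 := Real.cos_le_one (Real.sqrt a * τ)
      rcases le_or_gt 1 b with hb1 | hb1
      · -- b ≥ 1 : √b ≤ b so cosh √b ≤ cosh b
        have hsb : Real.sqrt b ≤ b := by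
          nlinarith [Real.sq_sqrt hb, Real.sqrt_nonneg b]
        have : Real.cosh (Real.sqrt b) ≤ Real.cosh b := by
          rw [Real.cosh_le_cosh, abs_of_nonneg (Real.sqrt_nonneg _), abs_of_nonneg hb]
          exact hsb
        rw [abs_le]; constructor <;> linarith
      · -- b < 1 : cosh √c ≤ cosh 1 ≤ 2 and cos (√a τ) ≥ 0
        have hsb1 : Real.sqrt b ≤ 1 := by
          nlinarith [Real.sq_sqrt hb, Real.sqrt_nonneg b]
        have hch2 : Real.cosh (Real.sqrt b) ≤ Real.cosh 1 := by
          rw [Real.cosh_le_cosh, abs_of_nonneg (Real.sqrt_nonneg _)]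
          simpa using hsb1
        have hcosh1 : Real.cosh 1 ≤ 2 := by
          rw [Real.cosh_eq]
          have h5 := Real.exp_one_lt_d9
          have h6 : Real.exp (-1) < 1 := by
            rw [show (1:ℝ) = Real.exp 0 by simp]
            exact Real.exp_lt_exp.2 (by norm_num)
          linarith
        -- |√a * τ| ≤ √b < π/2, hence cos (√a τ) ≥ 0
        have hy2 : (Real.sqrt a * τ) ^ 2 ≤ b := by
          have : (Real.sqrt a) ^ 2 = a := Real.sq_sqrt ha.le
          nlinarith
        have hyle : |Real.sqrt a * τ| ≤ Real.sqrt b := by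
          rw [← Real.sqrt_sq_eq_abs]
          exact Real.sqrt_le_sqrt hy2
        have hcosnn : 0 ≤ Real.cos (Real.sqrt a * τ) := by
          apply Real.cos_nonneg_of_mem_Icc
          constructor
          · have := (abs_le.1 hyle).1
            have hpi : (1:ℝ) ≤ Real.pi / 2 := by
              have := Real.pi_gt_three; linarith
            linarith
          · have := (abs_le.1 hyle).2
            have hpi : (1:ℝ) ≤ Real.pi / 2 := by
              have := Real.pi_gt_three; linarith
            linarith
        rw [abs_le]; constructor <;> linarith
  · refine ⟨b / Real.sqrt a, max 1 (Real.sqrt (b / a)), fun τ hτ => ?_⟩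
    have hτ1 : (1:ℝ) ≤ |τ| := le_trans (le_max_left _ _) hτ
    have hτ0 : 0 < |τ| := lt_of_lt_of_le one_pos hτ1
    have hba : Real.sqrt (b / a) ≤ |τ| := le_trans (le_max_right _ _) hτ
    have hτsq : b / a ≤ τ ^ 2 := by
      have := Real.sqrt_le_sqrt (le_of_eq (rfl : b / a = b / a))
      calc b / a = Real.sqrt (b / a) ^ 2 := (Real.sq_sqrt (by positivity)).symm
        _ ≤ |τ| ^ 2 := by nlinarith [Real.sqrt_nonneg (b / a)]
        _ = τ ^ 2 := sq_abs τ
    have hnn : 0 ≤ a * τ ^ 2 - b := by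
      have : b ≤ a * τ ^ 2 := by
        rw [div_le_iff₀ ha] at hτsq; linarith [hτsq]
      linarith
    rw [cosSqrt, if_pos hnn]
    set x : ℝ := Real.sqrt (a * τ ^ 2 - b) with hx
    set y : ℝ := Real.sqrt a * |τ| with hy
    have hsa : 0 < Real.sqrt a := Real.sqrt_pos.2 ha
    have hy0 : 0 < y := by positivity
    have hx0 : 0 ≤ x := Real.sqrt_nonneg _
    have hxsq : x ^ 2 = a * τ ^ 2 - b := Real.sq_sqrt hnn
    have hysq : y ^ 2 = a * τ ^ 2 := by
      rw [hy, mul_pow, Real.sq_sqrt ha.le, sq_abs]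
    have hxy : x ≤ y := by nlinarith
    have hcos : Real.cos (Real.sqrt a * τ) = Real.cos y := by
      rw [hy, show Real.sqrt a * |τ| = |Real.sqrt a * τ| by rw [abs_mul, abs_of_nonneg hsa.le], Real.cos_abs]
    rw [hcos]
    have hlip : |Real.cos x - Real.cos y| ≤ |x - y| := by
      rw [Real.cos_sub_cos]
      calc |-2 * Real.sin ((x + y) / 2) * Real.sin ((x - y) / 2)|
          = 2 * |Real.sin ((x + y) / 2)| * |Real.sin ((x - y) / 2)| := by
            rw [abs_mul, abs_mul]; norm_num
        _ ≤ 2 * 1 * |(x - y) / 2| := by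
            apply mul_le_mul
            · apply mul_le_mul_of_nonneg_left (Real.abs_sin_le_one _) (by norm_num)
            · exact Real.abs_sin_le_abs
            · exact abs_nonneg _
            · norm_num
        _ = |x - y| := by rw [abs_div, abs_two]; ring
    have hxyb : |x - y| ≤ b / y := by
      rw [abs_of_nonpos (by linarith), le_div_iff₀ hy0]
      nlinarith
    have hfin : b / y = b / Real.sqrt a / |τ| := by
      rw [hy, div_div]
    calc |Real.cos x - Real.cos y| ≤ |x - y| := hlip
      _ ≤ b / y := hxyb
      _ = b / Real.sqrt a / |τ| := hfin
end

section
/- (Main theorem) For every a > 0 and b ≥ 0, the function t ↦ cosh(√(a t² + b)) is exponentially convex on ℝ. -/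
open Finset intervalIntegral
open scoped Nat

namespace CoshEC

noncomputable def Jb (m n : ℕ) : ℝ := ∫ x in (-1:ℝ)..1, x ^ (2*m) * (1 - x^2) ^ n

lemma Jb_zero (m : ℕ) : Jb m 0 = 2 / (2*m+1) := by
  have h : Jb m 0 = ∫ x in (-1:ℝ)..1, x ^ (2*m) := by simp [Jb]
  rw [h, integral_pow]
  have : ((-1:ℝ)) ^ (2*m+1) = -1 := Odd.neg_one_pow ⟨m, by ring⟩
  rw [this]
  push_cast
  ring

lemma Jb_succ (m n : ℕ) : Jb m (n+1) = (2*n+2) / (2*m+1) * Jb (m+1) n := by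
  have hu : ∀ x ∈ Set.uIcc (-1:ℝ) 1, HasDerivAt (fun y : ℝ => (1 - y^2)^(n+1))
      (((n:ℝ)+1) * (1 - x^2)^n * (-(2*x))) x := by
    intro x _
    have h1 : HasDerivAt (fun y : ℝ => 1 - y^2) (-(2*x)) x := by
      simpa using (hasDerivAt_pow 2 x).const_sub 1
    have h2 := h1.pow (n+1)
    simp only [Nat.add_sub_cancel] at h2
    refine h2.congr_deriv ?_
    push_cast
    ring
  have hv : ∀ x ∈ Set.uIcc (-1:ℝ) 1, HasDerivAt (fun y : ℝ => y^(2*m+1))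
      ((2*(m:ℝ)+1) * x^(2*m)) x := by
    intro x _
    have h := hasDerivAt_pow (2*m+1) x
    simp only [Nat.add_sub_cancel] at h
    refine h.congr_deriv ?_
    push_cast
    ring
  have hparts := intervalIntegral.integral_mul_deriv_eq_deriv_mul hu hv
    (by apply Continuous.intervalIntegrable; continuity)
    (by apply Continuous.intervalIntegrable; continuity)
  have e1 : (∫ x in (-1:ℝ)..1, (1-x^2)^(n+1) * ((2*(m:ℝ)+1) * x^(2*m)))
      = (2*(m:ℝ)+1) * Jb m (n+1) := by
    rw [Jb, ← intervalIntegral.integral_const_mul]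
    congr 1; funext x; ring
  have e2 : (∫ x in (-1:ℝ)..1, (((n:ℝ)+1) * (1-x^2)^n * (-(2*x))) * x^(2*m+1))
      = -((2*(n:ℝ)+2) * Jb (m+1) n) := by
    rw [Jb, ← intervalIntegral.integral_const_mul, ← intervalIntegral.integral_neg]
    congr 1; funext x; ring
  rw [e1, e2] at hparts
  norm_num at hparts
  have h2m : (2*(m:ℝ)+1) ≠ 0 := by positivity
  field_simp
  linarith

lemma Jb_closed (n : ℕ) : ∀ m : ℕ, Jb m n
    = 4^(n+1) * (n ! : ℝ) * ((2*m)! : ℝ) * (((m+n+1)! : ℕ) : ℝ)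
      / ((((2*(m+n+1))! : ℕ) : ℝ) * (m ! : ℝ)) := by
  induction n with
  | zero =>
    intro m
    rw [Jb_zero]
    have h1 : 2*(m+0+1) = (2*m+1)+1 := by ring
    have h2 : m+0+1 = m+1 := by ring
    rw [h1, h2, Nat.factorial_succ ((2*m)+1), Nat.factorial_succ (2*m), Nat.factorial_succ m]
    push_cast
    have p1 : ((2*m)! : ℝ) > 0 := by exact_mod_cast Nat.factorial_pos _
    have p2 : ((m)! : ℝ) > 0 := by exact_mod_cast Nat.factorial_pos _
    field_simp
    ring
  | succ n ih =>
    intro m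
    rw [Jb_succ, ih (m+1)]
    have h1 : 2*(m+1) = (2*m+1)+1 := by ring
    have h2 : m+1+n+1 = m+(n+1)+1 := by ring
    have h3 : (((2*m+1)+1)!) = ((2*m+1)+1) * ((2*m)+1) * (2*m)! := by
      rw [Nat.factorial_succ, Nat.factorial_succ]; ring
    rw [h1, h2, h3, Nat.factorial_succ m, Nat.factorial_succ n]
    push_cast
    have p1 : ((2*m)! : ℝ) > 0 := by exact_mod_cast Nat.factorial_pos _
    have p2 : ((m)! : ℝ) > 0 := by exact_mod_cast Nat.factorial_pos _
    have p3 : ((n)! : ℝ) > 0 := by exact_mod_cast Nat.factorial_pos _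
    have p4 : (((2*(m+(n+1)+1))! : ℕ) : ℝ) > 0 := by exact_mod_cast Nat.factorial_pos _
    have p5 : (((m+(n+1)+1)! : ℕ) : ℝ) > 0 := by exact_mod_cast Nat.factorial_pos _
    have h2m : (2*(m:ℝ)+1) ≠ 0 := by positivity
    field_simp
    ring

lemma Jodd (j n : ℕ) (hj : Odd j) : (∫ x in (-1:ℝ)..1, x ^ j * (1 - x^2)^n) = 0 := by
  have h := intervalIntegral.integral_comp_neg (a := (-1:ℝ)) (b := 1)
    (fun x => x ^ j * (1 - x^2)^n)
  simp only [neg_neg] at h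
  have h2 : (∫ x in (-1:ℝ)..1, (-x) ^ j * (1 - (-x)^2)^n)
      = ∫ x in (-1:ℝ)..1, -(x ^ j * (1 - x^2)^n) := by
    congr 1; funext x
    rw [hj.neg_pow]; ring_nf
  rw [h2, intervalIntegral.integral_neg] at h
  linarith

lemma hasSum_I (n : ℕ) (u : ℝ) :
    HasSum (fun m : ℕ => u ^ (2*m) / ((2*m)! : ℝ) * Jb m n)
      (∫ x in (-1:ℝ)..1, (1 - x^2)^n * Real.exp (u*x)) := by
  have key : HasSum (fun j : ℕ => ∫ x in (-1:ℝ)..1, (u^j / (j ! : ℝ)) * (x^j * (1-x^2)^n))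
      (∫ x in (-1:ℝ)..1, (1-x^2)^n * Real.exp (u*x)) := by
    apply intervalIntegral.hasSum_integral_of_dominated_convergence
      (bound := fun j _ => |u|^j / (j ! : ℝ))
    · intro j
      apply Continuous.aestronglyMeasurable
      continuity
    · intro j
      refine MeasureTheory.ae_of_all _ fun x hx => ?_
      have hx' : x ∈ Set.Ioc (-1:ℝ) 1 := by
        simpa [Set.uIoc_of_le (by norm_num : (-1:ℝ) ≤ 1)] using hx
      have hx1 : |x| ≤ 1 := abs_le.2 ⟨le_of_lt hx'.1, hx'.2⟩
      have hsq : 0 ≤ 1 - x^2 := by nlinarith [abs_nonneg x, sq_abs x]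
      have hsq1 : 1 - x^2 ≤ 1 := by nlinarith
      have : |u^j / (j ! : ℝ) * (x^j * (1-x^2)^n)|
          = |u|^j / (j ! : ℝ) * (|x|^j * (1-x^2)^n) := by
        rw [abs_mul, abs_div, abs_mul, abs_pow, abs_pow, abs_pow,
          Nat.abs_cast, abs_of_nonneg hsq]
      rw [Real.norm_eq_abs, this]
      have h1 : |x|^j * (1-x^2)^n ≤ 1 := by
        apply mul_le_one₀ (pow_le_one₀ (abs_nonneg x) hx1)
          (by positivity) (pow_le_one₀ hsq hsq1)
      have h2 : (0:ℝ) ≤ |u|^j / (j ! : ℝ) := by positivity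
      nlinarith
    · exact MeasureTheory.ae_of_all _ fun x _ => Real.summable_pow_div_factorial |u|
    · apply _root_.intervalIntegrable_const
    · refine MeasureTheory.ae_of_all _ fun x _ => ?_
      have h := NormedSpace.expSeries_div_hasSum_exp (u*x)
      rw [← Real.exp_eq_exp_ℝ] at h
      have h2 := h.mul_right ((1-x^2)^n)
      rw [show (1-x^2)^n * Real.exp (u*x) = Real.exp (u*x) * (1-x^2)^n from mul_comm _ _]
      refine h2.congr_fun ?_
      intro j
      rw [mul_pow]; ring
  have hcongr : ∀ j : ℕ, (∫ x in (-1:ℝ)..1, (u^j / (j ! : ℝ)) * (x^j * (1-x^2)^n))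
      = u^j / (j ! : ℝ) * ∫ x in (-1:ℝ)..1, x^j * (1-x^2)^n := by
    intro j; exact intervalIntegral.integral_const_mul _ _
  have hinj : Function.Injective (fun m : ℕ => 2*m) := fun x y h => by dsimp at h; omega
  have hzero : ∀ j ∉ Set.range (fun m : ℕ => 2*m),
      (∫ x in (-1:ℝ)..1, (u^j / (j ! : ℝ)) * (x^j * (1-x^2)^n)) = 0 := by
    intro j hj
    have hodd : Odd j := by
      rcases Nat.even_or_odd j with ⟨m, hm⟩ | ho
      · exact absurd (Set.mem_range.2 ⟨m, by omega⟩) hj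
      · exact ho
    rw [hcongr, Jodd j n hodd, mul_zero]
  have hfin := (Function.Injective.hasSum_iff hinj hzero).2 key
  convert hfin using 1
  funext m
  simp only [Function.comp]
  rw [hcongr (2*m)]
  rfl

noncomputable def T (b : ℝ) : ℕ → ℝ → ℝ
  | 0 => fun u => Real.cosh u
  | (n+1) => fun u => b^(n+1) / (4^(n+1) * ((n+1)! : ℝ) * (n ! : ℝ))
      * ∫ x in (-1:ℝ)..1, (1 - x^2)^n * Real.exp (u*x)

noncomputable def gg (b u : ℝ) (p : ℕ × ℕ) : ℝ :=
  ((p.2+p.1).choose p.1 : ℝ) * b^p.1 * u^(2*p.2) / ((2*(p.2+p.1))! : ℝ)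

lemma gg_nonneg (b u : ℝ) (hb : 0 ≤ b) (p : ℕ × ℕ) : 0 ≤ gg b u p := by
  unfold gg
  have h1 : (0:ℝ) ≤ u^(2*p.2) := by rw [pow_mul]; positivity
  positivity

lemma hasSum_row (b u : ℝ) (n : ℕ) : HasSum (fun m => gg b u (n, m)) (T b n u) := by
  cases n with
  | zero =>
    have h := Real.hasSum_cosh u
    apply h.congr_fun
    intro m
    simp [gg, T]
  | succ n =>
    have h := (hasSum_I n u).mul_left (b^(n+1) / (4^(n+1) * ((n+1)! : ℝ) * (n ! : ℝ)))
    apply h.congr_fun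
    intro m
    rw [Jb_closed n m]
    unfold gg
    simp only [show m+(n+1) = m+n+1 from by omega]
    have hch : (((m+n+1).choose (n+1) : ℕ) : ℝ)
        = (((m+n+1)! : ℕ) : ℝ) / ((((n+1)! : ℕ) : ℝ) * ((m ! : ℕ) : ℝ)) := by
      have hle : n+1 ≤ m+n+1 := by omega
      rw [Nat.cast_choose ℝ hle, show m+n+1-(n+1) = m from by omega]
    simp only [hch]
    have p1 : ((2*m)! : ℝ) > 0 := by exact_mod_cast Nat.factorial_pos _
    have p2 : ((m)! : ℝ) > 0 := by exact_mod_cast Nat.factorial_pos _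
    have p3 : ((n)! : ℝ) > 0 := by exact_mod_cast Nat.factorial_pos _
    have p4 : (((n+1))! : ℝ) > 0 := by exact_mod_cast Nat.factorial_pos _
    have p5 : (((2*(m+n+1))! : ℕ) : ℝ) > 0 := by exact_mod_cast Nat.factorial_pos _
    have p6 : (((m+n+1)! : ℕ) : ℝ) > 0 := by exact_mod_cast Nat.factorial_pos _
    field_simp

lemma diag_sum (b u : ℝ) (k : ℕ) :
    ∑ p ∈ Finset.HasAntidiagonal.antidiagonal k, gg b u p = (u^2+b)^k / ((2*k)! : ℝ) := by
  rw [Finset.Nat.sum_antidiagonal_eq_sum_range_succ_mk]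
  rw [show u^2+b = b+u^2 from add_comm _ _, add_pow, Finset.sum_div]
  apply Finset.sum_congr rfl
  intro i hi
  have hik : i ≤ k := by
    have := Finset.mem_range.1 hi; omega
  have hki : k - i + i = k := Nat.sub_add_cancel hik
  unfold gg
  simp only [hki]
  rw [pow_mul]
  ring

lemma summable_diag (b u : ℝ) (hb : 0 ≤ b) :
    Summable (fun k => (u^2+b)^k / ((2*k)! : ℝ)) := by
  have hy : (0:ℝ) ≤ u^2+b := by positivity
  apply Summable.of_nonneg_of_le (fun k => by positivity)
    (fun k => ?_) (Real.summable_pow_div_factorial (u^2+b))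
  apply div_le_div_of_nonneg_left (by positivity) ?_ ?_
  · exact_mod_cast Nat.factorial_pos _
  · exact_mod_cast Nat.factorial_le (by omega)

lemma summable_gg (b u : ℝ) (hb : 0 ≤ b) : Summable (gg b u) := by
  rw [← (Finset.HasAntidiagonal.sigmaAntidiagonalEquivProd (A := ℕ)).summable_iff]
  apply (summable_sigma_of_nonneg fun _ => gg_nonneg b u hb _).2
  constructor
  · intro k
    exact Summable.of_finite
  · apply Summable.congr (summable_diag b u hb)
    intro k
    rw [← diag_sum b u k]
    exact (Finset.tsum_subtype (Finset.HasAntidiagonal.antidiagonal k) (gg b u)).symm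

lemma hasSum_T (b u : ℝ) (hb : 0 ≤ b) :
    HasSum (fun n => T b n u) (Real.cosh (Real.sqrt (u^2+b))) := by
  have hg := summable_gg b u hb
  have hy : (0:ℝ) ≤ u^2+b := by positivity
  have hcosh : HasSum (fun k => (u^2+b)^k / ((2*k)! : ℝ)) (Real.cosh (Real.sqrt (u^2+b))) := by
    have h := Real.hasSum_cosh (Real.sqrt (u^2+b))
    apply h.congr_fun
    intro k
    rw [pow_mul, Real.sq_sqrt hy]
  have htot : HasSum (gg b u) (Real.cosh (Real.sqrt (u^2+b))) := by
    rw [hg.hasSum_iff]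
    have hgs : Summable (gg b u ∘ (Finset.HasAntidiagonal.sigmaAntidiagonalEquivProd (A := ℕ))) :=
      (Finset.HasAntidiagonal.sigmaAntidiagonalEquivProd (A := ℕ)).summable_iff.2 hg
    have h1 : ∑' p, gg b u p
        = ∑' (x : Σ k : ℕ, Finset.HasAntidiagonal.antidiagonal k), gg b u
            ((Finset.HasAntidiagonal.sigmaAntidiagonalEquivProd (A := ℕ)) x) :=
      ((Finset.HasAntidiagonal.sigmaAntidiagonalEquivProd (A := ℕ)).tsum_eq (gg b u)).symm
    have h2 : ∑' (x : Σ k : ℕ, Finset.HasAntidiagonal.antidiagonal k), gg b u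
          ((Finset.HasAntidiagonal.sigmaAntidiagonalEquivProd (A := ℕ)) x)
        = ∑' (k : ℕ), ∑' (p : Finset.HasAntidiagonal.antidiagonal k), gg b u
            ((Finset.HasAntidiagonal.sigmaAntidiagonalEquivProd (A := ℕ)) ⟨k, p⟩) := hgs.tsum_sigma
    rw [h1, h2]
    have h3 : ∀ k : ℕ, ∑' (p : Finset.HasAntidiagonal.antidiagonal k),
        gg b u ((Finset.HasAntidiagonal.sigmaAntidiagonalEquivProd (A := ℕ)) ⟨k, p⟩)
        = (u^2+b)^k/((2*k)! : ℝ) := by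
      intro k
      have : ∀ p : Finset.HasAntidiagonal.antidiagonal k,
          gg b u ((Finset.HasAntidiagonal.sigmaAntidiagonalEquivProd (A := ℕ)) ⟨k, p⟩) = gg b u (p : ℕ × ℕ) :=
        fun p => rfl
      rw [tsum_congr this, Finset.tsum_subtype (Finset.HasAntidiagonal.antidiagonal k) (gg b u)]
      exact diag_sum b u k
    rw [tsum_congr h3]
    exact hcosh.tsum_eq
  exact htot.prod_fiberwise (hasSum_row b u)

lemma herm {N : ℕ} (w : Fin N → ℂ) :
    ∑ r, ∑ s, w r * starRingEnd ℂ (w s) = ((Complex.normSq (∑ r, w r) : ℝ) : ℂ) := by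
  calc ∑ r, ∑ s, w r * starRingEnd ℂ (w s)
      = (∑ r, w r) * (∑ s, starRingEnd ℂ (w s)) := by rw [Finset.sum_mul_sum]
    _ = (∑ r, w r) * starRingEnd ℂ (∑ s, w s) := by rw [map_sum]
    _ = _ := Complex.mul_conj _

lemma Q0 {N : ℕ} (cc : ℝ) (t : Fin N → ℝ) (ξ : Fin N → ℂ) :
    ∃ q : ℝ, 0 ≤ q ∧ ∑ r, ∑ s, ((Real.cosh (cc*(t r + t s)) : ℝ) : ℂ) * ξ r * starRingEnd ℂ (ξ s)
      = (q : ℂ) := by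
  set w₁ : Fin N → ℂ := fun r => (Real.exp (cc * t r) : ℂ) * ξ r with hw₁
  set w₂ : Fin N → ℂ := fun r => (Real.exp (-(cc * t r)) : ℂ) * ξ r with hw₂
  refine ⟨(Complex.normSq (∑ r, w₁ r) + Complex.normSq (∑ r, w₂ r))/2, by
    have h1 := Complex.normSq_nonneg (∑ r, w₁ r)
    have h2 := Complex.normSq_nonneg (∑ r, w₂ r)
    linarith, ?_⟩
  have hterm : ∀ r s : Fin N, ((Real.cosh (cc*(t r + t s)) : ℝ) : ℂ) * ξ r * starRingEnd ℂ (ξ s)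
      = (w₁ r * starRingEnd ℂ (w₁ s) + w₂ r * starRingEnd ℂ (w₂ s))/2 := by
    intro r s
    simp only [hw₁, hw₂, Real.cosh_eq, map_mul, Complex.conj_ofReal]
    rw [show cc*(t r + t s) = cc*t r + cc*t s from by ring, Real.exp_add,
      show -(cc*t r + cc*t s) = -(cc*t r) + -(cc*t s) from by ring, Real.exp_add]
    push_cast
    ring
  rw [Finset.sum_congr rfl fun r _ => Finset.sum_congr rfl fun s _ => hterm r s]
  have hsplit : ∑ r : Fin N, ∑ s : Fin N,
        (w₁ r * starRingEnd ℂ (w₁ s) + w₂ r * starRingEnd ℂ (w₂ s))/2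
      = ((∑ r : Fin N, ∑ s : Fin N, w₁ r * starRingEnd ℂ (w₁ s))
        + (∑ r : Fin N, ∑ s : Fin N, w₂ r * starRingEnd ℂ (w₂ s)))/2 := by
    simp [add_div, Finset.sum_add_distrib, Finset.sum_div]
  rw [hsplit, herm w₁, herm w₂]
  push_cast
  ring

lemma Qn {N : ℕ} (n : ℕ) (cc : ℝ) (t : Fin N → ℝ) (ξ : Fin N → ℂ) :
    ∃ q : ℝ, 0 ≤ q ∧ ∑ r, ∑ s,
      ((∫ x in (-1:ℝ)..1, (1-x^2)^n * Real.exp (cc*(t r + t s)*x) : ℝ) : ℂ)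
        * ξ r * starRingEnd ℂ (ξ s) = (q : ℂ) := by
  set z : ℝ → ℂ := fun x => ∑ r, (Real.exp (cc * t r * x) : ℂ) * ξ r with hz
  set G : Fin N → Fin N → ℝ → ℂ := fun r s x =>
    (((1-x^2)^n : ℝ) : ℂ) * ((Real.exp (cc*t r*x) : ℂ) * ξ r)
      * ((Real.exp (cc*t s*x) : ℂ) * starRingEnd ℂ (ξ s)) with hG
  have hGcont : ∀ r s : Fin N, Continuous (G r s) := by
    intro r s
    apply Continuous.mul
    apply Continuous.mul
    · exact Complex.continuous_ofReal.comp (by continuity)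
    · exact (Complex.continuous_ofReal.comp (by continuity)).mul continuous_const
    · exact (Complex.continuous_ofReal.comp (by continuity)).mul continuous_const
  refine ⟨∫ x in (-1:ℝ)..1, (1-x^2)^n * Complex.normSq (z x), ?_, ?_⟩
  · apply intervalIntegral.integral_nonneg (by norm_num : (-1:ℝ) ≤ 1)
    intro x hx
    have h1 : (0:ℝ) ≤ 1 - x^2 := by
      obtain ⟨ha1, ha2⟩ := hx
      nlinarith
    exact mul_nonneg (pow_nonneg h1 n) (Complex.normSq_nonneg _)
  · have hA : ∀ r s : Fin N,
        ((∫ x in (-1:ℝ)..1, (1-x^2)^n * Real.exp (cc*(t r + t s)*x) : ℝ) : ℂ)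
          * ξ r * starRingEnd ℂ (ξ s)
        = ∫ x in (-1:ℝ)..1, G r s x := by
      intro r s
      rw [← intervalIntegral.integral_ofReal
        (f := fun x => (1-x^2)^n * Real.exp (cc*(t r+t s)*x)),
        ← intervalIntegral.integral_mul_const, ← intervalIntegral.integral_mul_const]
      congr 1
      funext x
      rw [hG, show cc*(t r + t s)*x = cc*t r*x + cc*t s*x from by ring, Real.exp_add]
      push_cast
      ring
    simp only [hA]
    have hinner : ∀ r : Fin N, ∑ s, ∫ x in (-1:ℝ)..1, G r s x
        = ∫ x in (-1:ℝ)..1, ∑ s, G r s x := fun r =>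
      (intervalIntegral.integral_finset_sum (fun s _ => (hGcont r s).intervalIntegrable _ _)).symm
    simp only [hinner]
    rw [← intervalIntegral.integral_finset_sum (fun r _ =>
      (continuous_finset_sum _ fun s _ => hGcont r s).intervalIntegrable _ _)]
    rw [← intervalIntegral.integral_ofReal
      (f := fun x => (1-x^2)^n * Complex.normSq (z x))]
    congr 1
    funext x
    have e1 : (z x) * starRingEnd ℂ (z x)
        = ∑ r, ∑ s, ((Real.exp (cc*t r*x) : ℂ) * ξ r)
            * ((Real.exp (cc*t s*x) : ℂ) * starRingEnd ℂ (ξ s)) := by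
      rw [hz]
      simp only [map_sum, map_mul, Complex.conj_ofReal]
      rw [Finset.sum_mul_sum]
    calc ∑ r, ∑ s, G r s x
        = (((1-x^2)^n : ℝ) : ℂ) * ((z x) * starRingEnd ℂ (z x)) := by
          rw [e1, Finset.mul_sum]
          apply Finset.sum_congr rfl
          intro r _
          rw [Finset.mul_sum]
          apply Finset.sum_congr rfl
          intro s2 _
          rw [hG]
          ring
      _ = _ := by rw [Complex.mul_conj]; push_cast; ring

end CoshEC

theorem cosh_sqrt_expConvex' (a b : ℝ) (ha : 0 < a) (hb : 0 ≤ b) :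
    Continuous (fun t => Real.cosh (Real.sqrt (a * t ^ 2 + b))) ∧
    ∀ (N : ℕ), 0 < N → ∀ (t : Fin N → ℝ) (ξ : Fin N → ℂ),
      0 ≤ (∑ r, ∑ s, ((Real.cosh (Real.sqrt (a * (t r + t s) ^ 2 + b)) : ℝ) : ℂ)
            * ξ r * starRingEnd ℂ (ξ s)).re ∧
      (∑ r, ∑ s, ((Real.cosh (Real.sqrt (a * (t r + t s) ^ 2 + b)) : ℝ) : ℂ)
            * ξ r * starRingEnd ℂ (ξ s)).im = 0 := by
  constructor
  · exact Real.continuous_cosh.comp (Real.continuous_sqrt.comp (by continuity))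
  intro N hN t ξ
  set cc := Real.sqrt a with hcc
  have hrw : ∀ s : ℝ, a * s^2 + b = (cc*s)^2 + b := fun s => by
    rw [mul_pow, hcc, Real.sq_sqrt ha.le]
  have hQ : ∀ n : ℕ, ∃ q : ℝ, 0 ≤ q ∧
      (∑ r, ∑ s, ((CoshEC.T b n (cc*(t r + t s)) : ℝ) : ℂ) * ξ r * starRingEnd ℂ (ξ s))
        = (q : ℂ) := by
    intro n
    cases n with
    | zero => simpa only [CoshEC.T] using CoshEC.Q0 cc t ξ
    | succ n =>
      obtain ⟨q, hq0, hq⟩ := CoshEC.Qn n cc t ξ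
      refine ⟨(b^(n+1) / (4^(n+1) * ((n+1)! : ℝ) * (n ! : ℝ))) * q,
        mul_nonneg (div_nonneg (pow_nonneg hb _) (by positivity)) hq0, ?_⟩
      have hterm : ∀ r s : Fin N,
          ((CoshEC.T b (n+1) (cc*(t r + t s)) : ℝ) : ℂ) * ξ r * starRingEnd ℂ (ξ s)
          = ((b^(n+1) / (4^(n+1) * ((n+1)! : ℝ) * (n ! : ℝ)) : ℝ) : ℂ)
            * (((∫ x in (-1:ℝ)..1, (1-x^2)^n * Real.exp (cc*(t r + t s)*x) : ℝ) : ℂ)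
                * ξ r * starRingEnd ℂ (ξ s)) := by
        intro r s
        simp only [CoshEC.T]
        push_cast
        ring
      rw [Finset.sum_congr rfl fun r (_ : r ∈ Finset.univ) =>
        Finset.sum_congr rfl fun s (_ : s ∈ Finset.univ) => hterm r s]
      simp only [← Finset.mul_sum]
      rw [hq]
      push_cast
      ring
  have hhs : ∀ r s : Fin N, HasSum
      (fun n => ((CoshEC.T b n (cc*(t r+t s)) : ℝ) : ℂ) * ξ r * starRingEnd ℂ (ξ s))
      (((Real.cosh (Real.sqrt (a*(t r + t s)^2 + b)) : ℝ) : ℂ) * ξ r * starRingEnd ℂ (ξ s)) := by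
    intro r s
    have h := CoshEC.hasSum_T b (cc*(t r + t s)) hb
    rw [← hrw (t r + t s)] at h
    exact ((Complex.ofRealCLM.hasSum h).mul_right _).mul_right _
  have hS : HasSum
      (fun n => ∑ r, ∑ s, ((CoshEC.T b n (cc*(t r+t s)) : ℝ):ℂ) * ξ r * starRingEnd ℂ (ξ s))
      (∑ r, ∑ s, ((Real.cosh (Real.sqrt (a*(t r+t s)^2+b)) : ℝ):ℂ) * ξ r * starRingEnd ℂ (ξ s)) :=
    hasSum_sum fun r _ => hasSum_sum fun s _ => hhs r s
  have hre := Complex.reCLM.hasSum hS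
  have him := Complex.imCLM.hasSum hS
  constructor
  · rw [show (∑ r, ∑ s, ((Real.cosh (Real.sqrt (a*(t r+t s)^2+b)) : ℝ):ℂ)
        * ξ r * starRingEnd ℂ (ξ s)).re
      = Complex.reCLM (∑ r, ∑ s, ((Real.cosh (Real.sqrt (a*(t r+t s)^2+b)) : ℝ):ℂ)
        * ξ r * starRingEnd ℂ (ξ s)) from rfl, ← hre.tsum_eq]
    apply tsum_nonneg
    intro n
    obtain ⟨q, hq0, hq⟩ := hQ n
    simp [hq, hq0]
  · rw [show (∑ r, ∑ s, ((Real.cosh (Real.sqrt (a*(t r+t s)^2+b)) : ℝ):ℂ)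
        * ξ r * starRingEnd ℂ (ξ s)).im
      = Complex.imCLM (∑ r, ∑ s, ((Real.cosh (Real.sqrt (a*(t r+t s)^2+b)) : ℝ):ℂ)
        * ξ r * starRingEnd ℂ (ξ s)) from rfl, ← him.tsum_eq]
    have hz : ∀ n : ℕ, Complex.imCLM ((fun n => ∑ r, ∑ s,
        ((CoshEC.T b n (cc*(t r+t s)) : ℝ):ℂ) * ξ r * starRingEnd ℂ (ξ s)) n) = 0 := by
      intro n
      obtain ⟨q, hq0, hq⟩ := hQ n
      simp [hq]
    rw [tsum_congr hz, tsum_zero]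



/-- A function `f : ℝ → ℝ` is exponentially convex if it is continuous and all the
Hermitian forms `∑_{r,s} f(t_r + t_s) ξ_r conj(ξ_s)` are nonnegative (real). -/
def ExpConvex (f : ℝ → ℝ) : Prop :=
  Continuous f ∧
    ∀ (N : ℕ), 0 < N → ∀ (t : Fin N → ℝ) (ξ : Fin N → ℂ),
      0 ≤ (∑ r, ∑ s, (f (t r + t s) : ℂ) * ξ r * starRingEnd ℂ (ξ s)).re ∧
      (∑ r, ∑ s, (f (t r + t s) : ℂ) * ξ r * starRingEnd ℂ (ξ s)).im = 0

theorem cosh_sqrt_expConvex (a b : ℝ) (ha : 0 < a) (hb : 0 ≤ b) :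
    ExpConvex (fun t => Real.cosh (Real.sqrt (a * t ^ 2 + b))) := by
  obtain ⟨h1, h2⟩ := cosh_sqrt_expConvex' a b ha hb
  exact ⟨h1, fun N hN t ξ => by simpa using h2 N hN t ξ⟩
end

section
/- Fix a > 0, b > 0 and λ ∈ (−√a, 0). The set of points ζ = ξ + iη in ℂ with η ≠ 0, lying off the vertical segment S = {iη : |η| ≤ √(b/a)}, at which Im(√(aζ²+b) + λζ) = 0 (with the branch of √(aζ²+b) positive for large real ζ) is exactly the ellipse ξ²/A² + η²/B² = 1 minus its two real points, where A = √(b/a)·(|λ|/√a)·(1−λ²/a)^{−1/2} and B = √(b/a)·(1−λ²/a)^{−1/2}. Moreover A < B and √(b/a) < B, so S lies inside the ellipse. -/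
/-- The vertical slit `S = {iη : |η| ≤ √(b/a)}`. -/
def slit (a b : ℝ) : Set ℂ :=
  {ζ : ℂ | ζ.re = 0 ∧ |ζ.im| ≤ Real.sqrt (b / a)}

/-- `w` is the single-valued holomorphic branch of `√(aζ² + b)` on `ℂ ∖ S` which is
positive for large real `ζ`. -/
structure IsSqrtBranch (a b : ℝ) (w : ℂ → ℂ) : Prop where
  analytic : AnalyticOn ℂ w (slit a b)ᶜ
  sq : ∀ ζ ∈ (slit a b)ᶜ, w ζ ^ 2 = (a : ℂ) * ζ ^ 2 + b
  posLarge : ∃ M : ℝ, ∀ x : ℝ, M < x → 0 < (w (x : ℂ)).re ∧ (w (x : ℂ)).im = 0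

lemma branch_parts {a b : ℝ} {w : ℂ → ℂ} (hw : IsSqrtBranch a b w) {ζ : ℂ}
    (hζ : ζ ∉ slit a b) :
    (w ζ).re ^ 2 - (w ζ).im ^ 2 = a * (ζ.re ^ 2 - ζ.im ^ 2) + b ∧
    (w ζ).re * (w ζ).im = a * (ζ.re * ζ.im) := by
  have h := hw.sq ζ hζ
  rw [Complex.ext_iff] at h
  obtain ⟨h1, h2⟩ := h
  simp only [pow_two, Complex.mul_re, Complex.mul_im, Complex.add_re, Complex.add_im,
    Complex.ofReal_re, Complex.ofReal_im] at h1 h2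
  constructor <;> nlinarith [h1, h2]

lemma branch_re_pos {a b : ℝ} (ha : 0 < a) (hb : 0 < b) {w : ℂ → ℂ}
    (hw : IsSqrtBranch a b w) : ∀ ζ : ℂ, 0 < ζ.re → 0 < (w ζ).re := by
  have hRsub : {ζ : ℂ | 0 < ζ.re} ⊆ (slit a b)ᶜ := by
    intro ζ hζ hmem
    exact absurd hmem.1 (ne_of_gt hζ)
  have hcont : ContinuousOn (fun ζ => (w ζ).re) {ζ : ℂ | 0 < ζ.re} :=
    Complex.continuous_re.comp_continuousOn (hw.analytic.continuousOn.mono hRsub)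
  have hne : ∀ ζ ∈ {ζ : ℂ | 0 < ζ.re}, (w ζ).re ≠ 0 := by
    intro ζ hζ h0
    obtain ⟨h1, h2⟩ := branch_parts hw (hRsub hζ)
    rw [h0] at h1 h2
    have him : ζ.im = 0 := by
      have h3 : a * (ζ.re * ζ.im) = 0 := by linarith
      rcases mul_eq_zero.mp h3 with h | h
      · exact absurd h (ne_of_gt ha)
      · rcases mul_eq_zero.mp h with h' | h'
        · exact absurd h' (ne_of_gt hζ)
        · exact h'
    rw [him] at h1
    nlinarith [sq_nonneg (w ζ).im, sq_nonneg ζ.re, (hζ : (0:ℝ) < ζ.re)]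
  obtain ⟨M, hM⟩ := hw.posLarge
  set x₀ : ℝ := max M 0 + 1 with hx₀def
  have hx₀M : M < x₀ := (le_max_left M 0).trans_lt (lt_add_one _)
  have hx₀pos : 0 < x₀ := lt_of_le_of_lt (le_max_right M 0) (lt_add_one _)
  have hx₀mem : (x₀ : ℂ) ∈ {ζ : ℂ | 0 < ζ.re} := by
    simpa using hx₀pos
  have hwx₀ : 0 < (w (x₀ : ℂ)).re := (hM x₀ hx₀M).1
  intro ζ hζ
  by_contra hcon
  have hlt : (w ζ).re < 0 := lt_of_le_of_ne (not_lt.mp hcon) (hne ζ hζ)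
  have hiv := (convex_halfSpace_re_gt (0:ℝ)).isPreconnected.intermediate_value
    (hζ : ζ ∈ {ζ : ℂ | 0 < ζ.re}) hx₀mem hcont
  obtain ⟨z, hz, hz0⟩ := hiv ⟨hlt.le, hwx₀.le⟩
  exact hne z hz hz0

lemma branch_im_sign {a b : ℝ} (ha : 0 < a) (hb : 0 < b) {w : ℂ → ℂ}
    (hw : IsSqrtBranch a b w) (ε : ℝ) (hε : ε = 1 ∨ ε = -1) :
    ∀ ζ : ℂ, ζ ∉ slit a b → 0 < ε * ζ.im → 0 < ε * (w ζ).im := by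
  set c := Real.sqrt (b / a) with hcdef
  have hc0 : 0 ≤ c := Real.sqrt_nonneg _
  have hc2 : c ^ 2 = b / a := Real.sq_sqrt (div_pos hb ha).le
  have hε2 : ε ^ 2 = 1 := by rcases hε with h | h <;> rw [h] <;> norm_num
  have hεne : ε ≠ 0 := by rcases hε with h | h <;> rw [h] <;> norm_num
  set Q₁ : Set ℂ := {ζ : ℂ | 0 < ζ.re ∧ 0 < ε * ζ.im} with hQ₁def
  set Q₂ : Set ℂ := {ζ : ℂ | ζ.re < 0 ∧ 0 < ε * ζ.im} with hQ₂def
  set T : Set ℂ := {ζ : ℂ | c < ε * ζ.im} with hTdef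
  set U : Set ℂ := (T ∪ Q₁) ∪ Q₂ with hUdef
  have hUchar : ∀ ζ : ℂ, ζ ∈ U ↔ (ζ ∉ slit a b ∧ 0 < ε * ζ.im) := by
    intro ζ
    simp only [hUdef, hTdef, hQ₁def, hQ₂def, Set.mem_union, Set.mem_setOf_eq, slit,
      Set.mem_setOf_eq, not_and, not_le]
    constructor
    · rintro ((h | h) | h)
      · refine ⟨fun hre => ?_, lt_of_le_of_lt hc0 h⟩
        have : ε * ζ.im ≤ |ζ.im| := by
          rcases hε with h' | h' <;> rw [h'] <;> simp [le_abs_self, neg_le_abs, neg_abs_le]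
        · linarith
      · exact ⟨fun hre => absurd hre (ne_of_gt h.1), h.2⟩
      · exact ⟨fun hre => absurd hre (ne_of_lt h.1), h.2⟩
    · rintro ⟨hs, him⟩
      rcases lt_trichotomy ζ.re 0 with h | h | h
      · exact Or.inr ⟨h, him⟩
      · left; left
        have habs : c < |ζ.im| := hs h
        have : |ζ.im| = ε * ζ.im := by
          rcases hε with h' | h' <;> rw [h'] at him ⊢
          · simpa using abs_of_pos (by linarith : (0:ℝ) < ζ.im)
          · have : ζ.im < 0 := by nlinarith
            simp [abs_of_neg this]
        linarith [habs.trans_le this.le]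
      · exact Or.inl (Or.inr ⟨h, him⟩)
  have hUsub : U ⊆ (slit a b)ᶜ := fun ζ hζ => ((hUchar ζ).1 hζ).1
  have hpre : IsPreconnected U := by
    have hT : IsPreconnected T := by
      rcases hε with h' | h'
      · have : T = {ζ : ℂ | c < ζ.im} := by ext ζ; simp [hTdef, h']
        rw [this]; exact (convex_halfSpace_im_gt c).isPreconnected
      · have : T = {ζ : ℂ | ζ.im < -c} := by
          ext ζ; simp only [hTdef, Set.mem_setOf_eq, h']; constructor <;> intro <;> linarith
        rw [this]; exact (convex_halfSpace_im_lt (-c)).isPreconnected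
    have hhalf : Convex ℝ {ζ : ℂ | 0 < ε * ζ.im} := by
      rcases hε with h' | h'
      · have : {ζ : ℂ | 0 < ε * ζ.im} = {ζ : ℂ | 0 < ζ.im} := by ext ζ; simp [h']
        rw [this]; exact convex_halfSpace_im_gt 0
      · have : {ζ : ℂ | 0 < ε * ζ.im} = {ζ : ℂ | ζ.im < 0} := by
          ext ζ; simp only [Set.mem_setOf_eq, h']; constructor <;> intro <;> linarith
        rw [this]; exact convex_halfSpace_im_lt 0
    have hQ₁p : IsPreconnected Q₁ := by
      have : Q₁ = {ζ : ℂ | 0 < ζ.re} ∩ {ζ : ℂ | 0 < ε * ζ.im} := rfl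
      rw [this]; exact ((convex_halfSpace_re_gt 0).inter hhalf).isPreconnected
    have hQ₂p : IsPreconnected Q₂ := by
      have : Q₂ = {ζ : ℂ | ζ.re < 0} ∩ {ζ : ℂ | 0 < ε * ζ.im} := rfl
      rw [this]; exact ((convex_halfSpace_re_lt 0).inter hhalf).isPreconnected
    set y : ℝ := ε * (c + 1) with hydef
    have hyim : ∀ x : ℝ, ((x : ℂ) + (y : ℂ) * Complex.I).im = y := by intro x; simp
    have hyre : ∀ x : ℝ, ((x : ℂ) + (y : ℂ) * Complex.I).re = x := by intro x; simp
    have hεy : ε * y = c + 1 := by rw [hydef]; nlinarith [hε2]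
    have hp₁ : (((1:ℝ) : ℂ) + (y : ℂ) * Complex.I) ∈ T := by
      simp only [hTdef, Set.mem_setOf_eq, hyim]
      linarith
    have hp₁' : (((1:ℝ) : ℂ) + (y : ℂ) * Complex.I) ∈ Q₁ := by
      simp only [hQ₁def, Set.mem_setOf_eq, hyim, hyre]
      constructor
      · norm_num
      · linarith
    have hp₂ : (((-1:ℝ) : ℂ) + (y : ℂ) * Complex.I) ∈ T ∪ Q₁ := by
      left
      simp only [hTdef, Set.mem_setOf_eq, hyim]
      linarith
    have hp₂' : (((-1:ℝ) : ℂ) + (y : ℂ) * Complex.I) ∈ Q₂ := by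
      simp only [hQ₂def, Set.mem_setOf_eq, hyim, hyre]
      constructor
      · norm_num
      · linarith
    exact IsPreconnected.union _ hp₂ hp₂' (IsPreconnected.union _ hp₁ hp₁' hT hQ₁p) hQ₂p
  have hcont : ContinuousOn (fun ζ => ε * (w ζ).im) U :=
    (continuous_const.mul (Complex.continuous_im)).comp_continuousOn
      (hw.analytic.continuousOn.mono hUsub)
  have hne : ∀ ζ ∈ U, ε * (w ζ).im ≠ 0 := by
    intro ζ hζ h0
    obtain ⟨hs, him⟩ := (hUchar ζ).1 hζ
    obtain ⟨h1, h2⟩ := branch_parts hw hs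
    have h0' : (w ζ).im = 0 := by
      rcases mul_eq_zero.mp h0 with h | h
      · exact absurd h hεne
      · exact h
    rw [h0'] at h1 h2
    have himζ : ζ.im ≠ 0 := by
      intro h; rw [h] at him; simp at him
    have hre : ζ.re = 0 := by
      have h3 : a * (ζ.re * ζ.im) = 0 := by linarith
      rcases mul_eq_zero.mp h3 with h | h
      · exact absurd h (ne_of_gt ha)
      · rcases mul_eq_zero.mp h with h' | h'
        · exact h'
        · exact absurd h' himζ
    have habs : c < |ζ.im| := by
      by_contra hle
      push_neg at hle
      exact hs ⟨hre, hle⟩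
    have h4 : c ^ 2 < ζ.im ^ 2 := by
      nlinarith [abs_nonneg ζ.im, sq_abs ζ.im]
    have h5 : b < a * ζ.im ^ 2 := by
      have : a * (c ^ 2) = b := by rw [hc2]; field_simp
      nlinarith
    nlinarith [sq_nonneg (w ζ).re, hre]
  have hζ₁mem : (((1:ℝ) : ℂ) + (ε : ℂ) * Complex.I) ∈ U := by
    rw [hUchar]
    constructor
    · intro hmem
      have : (((1:ℝ) : ℂ) + (ε : ℂ) * Complex.I).re = 1 := by simp
      rw [hmem.1] at this; norm_num at this
    · simp only [Complex.add_im, Complex.one_im, Complex.mul_im, Complex.ofReal_re,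
        Complex.I_im, Complex.ofReal_im, Complex.I_re]
      nlinarith [hε2]
  have h₁pos : 0 < ε * (w (((1:ℝ) : ℂ) + (ε : ℂ) * Complex.I)).im := by
    have hre1 : (((1:ℝ) : ℂ) + (ε : ℂ) * Complex.I).re = 1 := by simp
    have him1 : (((1:ℝ) : ℂ) + (ε : ℂ) * Complex.I).im = ε := by simp
    have hrepos := branch_re_pos ha hb hw _ (by rw [hre1]; norm_num)
    obtain ⟨h1, h2⟩ := branch_parts hw (hUsub hζ₁mem)
    rw [hre1, him1] at h2
    have h3 : (w (((1:ℝ) : ℂ) + (ε : ℂ) * Complex.I)).re *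
        (ε * (w (((1:ℝ) : ℂ) + (ε : ℂ) * Complex.I)).im) = a := by
      linear_combination ε * h2 + a * hε2
    nlinarith [hrepos, h3, ha]
  intro ζ hζs hζim
  have hζU : ζ ∈ U := (hUchar ζ).2 ⟨hζs, hζim⟩
  by_contra hcon
  have hlt : ε * (w ζ).im < 0 := lt_of_le_of_ne (not_lt.mp hcon) (hne ζ hζU)
  obtain ⟨z, hz, hz0⟩ := hpre.intermediate_value hζU hζ₁mem hcont ⟨hlt.le, h₁pos.le⟩
  exact hne z hz hz0

set_option maxHeartbeats 4000000 in
theorem level_set_is_ellipse (a b lam : ℝ) (ha : 0 < a) (hb : 0 < b)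
    (hlam₁ : -Real.sqrt a < lam) (hlam₂ : lam < 0)
    (w : ℂ → ℂ) (hw : IsSqrtBranch a b w) :
    let A : ℝ := Real.sqrt (b / a) * (|lam| / Real.sqrt a) * (1 - lam ^ 2 / a) ^ (-(1/2 : ℝ))
    let B : ℝ := Real.sqrt (b / a) * (1 - lam ^ 2 / a) ^ (-(1/2 : ℝ))
    {ζ : ℂ | ζ ∉ slit a b ∧ ζ.im ≠ 0 ∧ (w ζ + (lam : ℂ) * ζ).im = 0} =
      {ζ : ℂ | ζ.re ^ 2 / A ^ 2 + ζ.im ^ 2 / B ^ 2 = 1 ∧ ζ.im ≠ 0} ∧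
    A < B ∧ Real.sqrt (b / a) < B := by
  intro A B
  have hAdef : A = Real.sqrt (b / a) * (|lam| / Real.sqrt a) * (1 - lam ^ 2 / a) ^ (-(1/2 : ℝ)) := rfl
  have hBdef : B = Real.sqrt (b / a) * (1 - lam ^ 2 / a) ^ (-(1/2 : ℝ)) := rfl
  have hsa : 0 < Real.sqrt a := Real.sqrt_pos.2 ha
  have hsa2 : Real.sqrt a ^ 2 = a := Real.sq_sqrt ha.le
  have hab : lam ^ 2 < a := by
    nlinarith [mul_pos (show (0:ℝ) < Real.sqrt a + lam by linarith)
      (show (0:ℝ) < Real.sqrt a - lam by linarith)]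
  have hlamne : lam ≠ 0 := ne_of_lt hlam₂
  have hD : 0 < 1 - lam ^ 2 / a := by
    rw [sub_pos, div_lt_one ha]; exact hab
  have hD1 : 1 - lam ^ 2 / a < 1 := by
    have : 0 < lam ^ 2 / a := div_pos (by positivity) ha
    linarith
  have hba : 0 < b / a := div_pos hb ha
  have hsba : 0 < Real.sqrt (b / a) := Real.sqrt_pos.2 hba
  have hsba2 : Real.sqrt (b / a) ^ 2 = b / a := Real.sq_sqrt hba.le
  have hk : 0 < (1 - lam ^ 2 / a) ^ (-(1/2 : ℝ)) := Real.rpow_pos_of_pos hD _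
  have hrpow : ((1 - lam ^ 2 / a) ^ (-(1/2 : ℝ))) ^ 2 = (1 - lam ^ 2 / a)⁻¹ := by
    rw [← Real.rpow_natCast ((1 - lam ^ 2 / a) ^ (-(1/2 : ℝ))) 2, ← Real.rpow_mul hD.le]
    norm_num [Real.rpow_neg_one]
  have haD : a - lam ^ 2 ≠ 0 := by nlinarith
  have hane : a ≠ 0 := ne_of_gt ha
  have hB2 : B ^ 2 = b / (a - lam ^ 2) := by
    rw [hBdef, mul_pow, hrpow, hsba2]
    rw [inv_eq_one_div]
    field_simp
  have hA2 : A ^ 2 = b * lam ^ 2 / (a * (a - lam ^ 2)) := by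
    rw [hAdef, mul_pow, mul_pow, hrpow, hsba2, div_pow, sq_abs, hsa2]
    rw [inv_eq_one_div]
    field_simp
  have hApos : 0 < A := by
    rw [hAdef]
    have : 0 < |lam| := abs_pos.2 hlamne
    positivity
  have hBpos : 0 < B := by rw [hBdef]; positivity
  refine ⟨?_, ?_, ?_⟩
  · -- the set equality
    ext ζ
    simp only [Set.mem_setOf_eq]
    constructor
    · rintro ⟨hs, hη, him⟩
      obtain ⟨h1, h2⟩ := branch_parts hw hs
      have himv : (w ζ).im = -(lam * ζ.im) := by
        simp only [Complex.add_im, Complex.mul_im, Complex.ofReal_re, Complex.ofReal_im] at him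
        linarith
      refine ⟨?_, hη⟩
      have hulam : (w ζ).re * lam = -(a * ζ.re) := by
        rw [himv] at h2
        have h3 : ((w ζ).re * lam + a * ζ.re) * ζ.im = 0 := by linear_combination -h2
        rcases mul_eq_zero.mp h3 with h | h
        · linarith
        · exact absurd h hη
      have hE : a * (a - lam ^ 2) * ζ.re ^ 2 + lam ^ 2 * (a - lam ^ 2) * ζ.im ^ 2
          = b * lam ^ 2 := by
        rw [himv] at h1
        linear_combination lam ^ 2 * h1 + (a * ζ.re - (w ζ).re * lam) * hulam
      rw [hA2, hB2]
      field_simp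
      linear_combination hE
    · rintro ⟨hell, hη⟩
      rw [hA2, hB2] at hell
      have hlam2 : (0:ℝ) < lam ^ 2 := by positivity
      have haD' : 0 < a - lam ^ 2 := by nlinarith
      have hE : a * (a - lam ^ 2) * ζ.re ^ 2 + lam ^ 2 * (a - lam ^ 2) * ζ.im ^ 2
          = b * lam ^ 2 := by
        field_simp at hell
        have h6 : b * (a * (a - lam ^ 2) * ζ.re ^ 2 + lam ^ 2 * (a - lam ^ 2) * ζ.im ^ 2)
            = b * (b * lam ^ 2) := by linear_combination b * hell
        exact mul_left_cancel₀ (ne_of_gt hb) h6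
      have hs : ζ ∉ slit a b := by
        rintro ⟨hre, habs⟩
        rw [hre] at hE
        have h4 : ζ.im ^ 2 ≤ b / a := by
          nlinarith [sq_abs ζ.im, abs_nonneg ζ.im, Real.sqrt_nonneg (b / a), hsba2]
        have h5 : (a - lam ^ 2) * ζ.im ^ 2 = b := by
          have h6 : lam ^ 2 * ((a - lam ^ 2) * ζ.im ^ 2) = lam ^ 2 * b := by
            linear_combination hE
          exact mul_left_cancel₀ (ne_of_gt hlam2) h6
        have hba2 : a * (b / a) = b := by field_simp
        nlinarith [mul_le_mul_of_nonneg_left h4 haD'.le, mul_pos hlam2 hba, hba2]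
      refine ⟨hs, hη, ?_⟩
      have hre0 : (-(a * ζ.re / lam)) ^ 2 - (-(lam * ζ.im)) ^ 2
          = a * (ζ.re ^ 2 - ζ.im ^ 2) + b := by
        field_simp
        linear_combination hE
      have him0 : (-(a * ζ.re / lam)) * (-(lam * ζ.im)) = a * (ζ.re * ζ.im) := by
        field_simp
      have hz : (((-(a * ζ.re / lam) : ℝ) : ℂ) + ((-(lam * ζ.im) : ℝ) : ℂ) * Complex.I) ^ 2
          = (a : ℂ) * ζ ^ 2 + b := by
        rw [Complex.ext_iff]
        constructor
        · simp only [pow_two, Complex.mul_re, Complex.mul_im, Complex.add_re, Complex.add_im,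
            Complex.ofReal_re, Complex.ofReal_im, Complex.I_re, Complex.I_im]
          nlinarith [hre0]
        · simp only [pow_two, Complex.mul_re, Complex.mul_im, Complex.add_re, Complex.add_im,
            Complex.ofReal_re, Complex.ofReal_im, Complex.I_re, Complex.I_im]
          nlinarith [him0]
      have hww : w ζ = ((-(a * ζ.re / lam) : ℝ) : ℂ) + ((-(lam * ζ.im) : ℝ) : ℂ) * Complex.I ∨
          w ζ = -(((-(a * ζ.re / lam) : ℝ) : ℂ) + ((-(lam * ζ.im) : ℝ) : ℂ) * Complex.I) := by
        have h := hw.sq ζ hs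
        rw [← hz] at h
        have h7 : (w ζ - (((-(a * ζ.re / lam) : ℝ) : ℂ) + ((-(lam * ζ.im) : ℝ) : ℂ) * Complex.I)) *
            (w ζ + (((-(a * ζ.re / lam) : ℝ) : ℂ) + ((-(lam * ζ.im) : ℝ) : ℂ) * Complex.I)) = 0 := by
          linear_combination h
        rcases mul_eq_zero.mp h7 with h | h
        · left; linear_combination h
        · right; linear_combination h
      have himz : (((-(a * ζ.re / lam) : ℝ) : ℂ) + ((-(lam * ζ.im) : ℝ) : ℂ) * Complex.I).im = -(lam * ζ.im) := by simp
      rcases hww with hcase | hcase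
      · simp only [Complex.add_im, Complex.mul_im, Complex.ofReal_re, Complex.ofReal_im,
          hcase, himz]
        ring
      · exfalso
        have him' : (w ζ).im = lam * ζ.im := by
          rw [hcase]; simp
        rcases lt_or_gt_of_ne hη with h | h
        · have := branch_im_sign ha hb hw (-1) (Or.inr rfl) ζ hs (by nlinarith)
          -- 0 < -(w ζ).im, but (w ζ).im = lam * ζ.im > 0
          nlinarith
        · have := branch_im_sign ha hb hw 1 (Or.inl rfl) ζ hs (by nlinarith)
          nlinarith
  · -- A < B
    have habs' : |lam| < Real.sqrt a := by
      rw [abs_of_neg hlam₂]; linarith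
    have h1 : |lam| / Real.sqrt a < 1 := (div_lt_one hsa).2 habs'
    have h2 : 0 < |lam| / Real.sqrt a := div_pos (abs_pos.2 hlamne) hsa
    rw [hAdef, hBdef]
    nlinarith [mul_pos hsba hk]
  · -- sqrt (b/a) < B
    have h1 : 1 < (1 - lam ^ 2 / a) ^ (-(1/2 : ℝ)) := by
      rw [Real.one_lt_rpow_iff_of_pos hD]
      right
      constructor
      · exact hD1
      · norm_num
    rw [hBdef]
    nlinarith
end

section
/- Fix a > 0, b > 0 and λ ∈ (−√a, 0), and set v(ζ) = Im(√(aζ²+b) + λζ) on ℂ∖S with the branch positive for large real ζ, where S = {iη : |η| ≤ √(b/a)}. Then there exist ε > 0 and R < ∞ such that v(ζ)/Im(ζ) > 0 whenever |ζ| > R and Im ζ ≠ 0, and v(ζ)/Im(ζ) < 0 whenever ζ ∈ ℂ∖S, |ζ| < ε and Im ζ ≠ 0. -/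
lemma key_ratio (a b lam : ℝ) (ha : 0 < a) (hb : 0 < b) (ζ : ℂ) (wz : ℂ)
    (hsq : wz ^ 2 = (a : ℂ) * ζ ^ 2 + b) (him : ζ.im ≠ 0) :
    (wz + (lam : ℂ) * ζ).im / ζ.im
      = Real.sqrt a * (Complex.normSq (wz + (Real.sqrt a : ℂ) * ζ) - b)
          / (Complex.normSq (wz + (Real.sqrt a : ℂ) * ζ) + b) + lam := by
  set r := Real.sqrt a with hrdef
  have hr2 : r ^ 2 = a := Real.sq_sqrt ha.le
  have hr0 : 0 < r := Real.sqrt_pos.2 ha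
  set u := wz + (r : ℂ) * ζ with hu
  set s := Complex.normSq u with hs
  have hrc : ((r : ℂ)) ^ 2 = (a : ℂ) := by rw [← Complex.ofReal_pow, hr2]
  have hfu : (wz - (r : ℂ) * ζ) * u = (b : ℂ) := by
    rw [hu]; linear_combination hsq - ζ ^ 2 * hrc
  have hu0 : u ≠ 0 := by
    intro h0
    rw [h0, mul_zero] at hfu
    exact hb.ne' (by exact_mod_cast hfu.symm)
  have hs0 : 0 < s := Complex.normSq_pos.2 hu0
  have hf : wz - (r : ℂ) * ζ = (b : ℂ) * u⁻¹ := by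
    field_simp
    linear_combination hfu
  have hfim : (wz - (r : ℂ) * ζ).im * s = -b * u.im := by
    rw [hf]
    have h4 : ((b : ℂ) * u⁻¹).im = b * (-u.im / s) := by
      simp [Complex.mul_im, Complex.inv_im, Complex.ofReal_re, Complex.ofReal_im, ← hs]
    rw [h4]
    field_simp
  have h1 : u.im - (wz - (r : ℂ) * ζ).im = 2 * r * ζ.im := by
    rw [hu]
    simp [Complex.sub_im, Complex.add_im, Complex.mul_im, Complex.ofReal_re, Complex.ofReal_im]
    ring
  have h2 : u.im + (wz - (r : ℂ) * ζ).im = 2 * wz.im := by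
    rw [hu]
    simp [Complex.sub_im, Complex.add_im, Complex.mul_im, Complex.ofReal_re, Complex.ofReal_im]
    ring
  have E1 : u.im * (s + b) = 2 * r * ζ.im * s := by linear_combination s * h1 + hfim
  have E2 : 2 * wz.im * s = u.im * (s - b) := by linear_combination (-s) * h2 + hfim
  have hsb : 0 < s + b := by linarith
  have hwim : wz.im * (s + b) = r * ζ.im * (s - b) := by
    have h3 : wz.im * (s + b) * (2 * s) = r * ζ.im * (s - b) * (2 * s) := by
      linear_combination (s + b) * E2 + (s - b) * E1
    have h2s : (2 : ℝ) * s ≠ 0 := by positivity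
    exact mul_right_cancel₀ h2s h3
  have haddim : (wz + (lam : ℂ) * ζ).im = wz.im + lam * ζ.im := by
    simp [Complex.add_im, Complex.mul_im, Complex.ofReal_re, Complex.ofReal_im]
  rw [haddim]
  field_simp
  linear_combination hwim


lemma isPreconnected_norm_gt (R : ℝ) (hR : 0 < R) :
    IsPreconnected {z : ℂ | R < ‖z‖} := by
  have hrank : 1 < Module.rank ℝ ℂ := by
    rw [Complex.rank_real_complex]; norm_num
  have hsph : IsConnected (Metric.sphere (0 : ℂ) 1) :=
    isConnected_sphere hrank 0 zero_le_one
  have hIoi : IsConnected (Set.Ioi R) := isConnected_Ioi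
  have hprod : IsConnected ((Set.Ioi R) ×ˢ (Metric.sphere (0 : ℂ) 1)) :=
    hIoi.prod hsph
  have himg : IsConnected ((fun p : ℝ × ℂ => p.1 • p.2) ''
      ((Set.Ioi R) ×ˢ (Metric.sphere (0 : ℂ) 1))) :=
    hprod.image _ (Continuous.continuousOn (continuous_fst.smul continuous_snd))
  have heq : (fun p : ℝ × ℂ => p.1 • p.2) ''
      ((Set.Ioi R) ×ˢ (Metric.sphere (0 : ℂ) 1)) = {z : ℂ | R < ‖z‖} := by
    ext z
    constructor
    · rintro ⟨⟨t, y⟩, ⟨ht, hy⟩, rfl⟩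
      simp only [Set.mem_setOf_eq, norm_smul]
      rw [Set.mem_Ioi] at ht
      rw [mem_sphere_iff_norm, sub_zero] at hy
      rw [hy, mul_one, Real.norm_eq_abs, abs_of_pos (hR.trans ht)]
      exact ht
    · intro hz
      rw [Set.mem_setOf_eq] at hz
      have hz0 : z ≠ 0 := by
        intro h; rw [h, norm_zero] at hz; linarith
      refine ⟨(‖z‖, ‖z‖⁻¹ • z), ⟨hz, ?_⟩, ?_⟩
      · have hzn : ‖z‖ ≠ 0 := norm_ne_zero_iff.2 hz0
        rw [mem_sphere_iff_norm, sub_zero, norm_smul, Real.norm_eq_abs,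
          abs_of_nonneg (inv_nonneg.2 (norm_nonneg z)), inv_mul_cancel₀ hzn]
      · simp only [smul_smul]
        rw [mul_inv_cancel₀ (norm_ne_zero_iff.2 hz0), one_smul]
  rw [← heq]
  exact himg.isPreconnected


lemma normSq_u_small (a b : ℝ) (ha : 0 < a) (hb : 0 < b) (ζ : ℂ) (wz : ℂ)
    (hsq : wz ^ 2 = (a : ℂ) * ζ ^ 2 + b) (hζ1 : ‖ζ‖ ≤ 1) :
    Complex.normSq (wz + (Real.sqrt a : ℂ) * ζ)
      ≤ b + (2 * a + 2 * Real.sqrt a * Real.sqrt (a + b)) * ‖ζ‖ := by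
  set r := Real.sqrt a with hrdef
  have hr2 : r ^ 2 = a := Real.sq_sqrt ha.le
  have hr0 : 0 < r := Real.sqrt_pos.2 ha
  have habsw2 : ‖wz‖ ^ 2 ≤ a * ‖ζ‖ ^ 2 + b := by
    have h1 : ‖wz‖ ^ 2 = ‖wz ^ 2‖ := (norm_pow wz 2).symm
    rw [h1, hsq]
    calc ‖(a : ℂ) * ζ ^ 2 + b‖
        ≤ ‖(a : ℂ) * ζ ^ 2‖ + ‖(b : ℂ)‖ := norm_add_le _ _
      _ = a * ‖ζ‖ ^ 2 + b := by
          rw [norm_mul, norm_pow, Complex.norm_of_nonneg ha.le, Complex.norm_of_nonneg hb.le]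
  have hζsq2 : ‖ζ‖ ^ 2 ≤ ‖ζ‖ := by nlinarith [norm_nonneg ζ]
  have habsw : ‖wz‖ ≤ Real.sqrt (a + b) := by
    have h2 : ‖wz‖ ^ 2 ≤ a + b := by nlinarith [norm_nonneg ζ, hζsq2, (mul_le_mul_of_nonneg_left hζsq2 ha.le : a * ‖ζ‖ ^ 2 ≤ a * ‖ζ‖)]
    calc ‖wz‖ = Real.sqrt (‖wz‖ ^ 2) :=
          (Real.sqrt_sq (norm_nonneg _)).symm
      _ ≤ Real.sqrt (a + b) := Real.sqrt_le_sqrt h2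
  have habsu : ‖wz + (r : ℂ) * ζ‖ ≤ ‖wz‖ + r * ‖ζ‖ := by
    calc ‖wz + (r : ℂ) * ζ‖
        ≤ ‖wz‖ + ‖(r : ℂ) * ζ‖ := norm_add_le _ _
      _ = ‖wz‖ + r * ‖ζ‖ := by
          rw [norm_mul, Complex.norm_of_nonneg hr0.le]
  rw [← Complex.sq_norm]
  have h3 : ‖wz + (r : ℂ) * ζ‖ ^ 2 ≤ (‖wz‖ + r * ‖ζ‖) ^ 2 :=
    pow_le_pow_left₀ (norm_nonneg _) habsu 2
  have h8 : r ^ 2 * ‖ζ‖ ^ 2 = a * ‖ζ‖ ^ 2 := by rw [hr2]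
  nlinarith [habsw2, norm_nonneg ζ, Real.sqrt_nonneg (a + b), norm_nonneg wz, h8,
    (mul_le_mul_of_nonneg_left hζsq2 ha.le : a * ‖ζ‖ ^ 2 ≤ a * ‖ζ‖),
    (mul_le_mul_of_nonneg_left habsw (by positivity : (0:ℝ) ≤ 2 * r * ‖ζ‖) :
      2 * r * ‖ζ‖ * ‖wz‖ ≤ 2 * r * ‖ζ‖ * Real.sqrt (a + b))]

lemma slit_subset_ball (a b : ℝ) (ha : 0 < a) (hb : 0 < b) {R : ℝ} (hR0 : 0 < R)
    (hR2 : b ≤ a * R ^ 2) : ∀ ζ ∈ slit a b, ‖ζ‖ ≤ R := by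
  intro ζ ⟨hre, him⟩
  have h1 : ‖ζ‖ ≤ |ζ.im| := by
    calc ‖ζ‖ ≤ |ζ.re| + |ζ.im| := Complex.norm_le_abs_re_add_abs_im ζ
    _ = |ζ.im| := by rw [hre, abs_zero, zero_add]
  have h2 : Real.sqrt (b / a) ≤ R := by
    rw [show R = Real.sqrt (R ^ 2) by rw [Real.sqrt_sq hR0.le]]
    apply Real.sqrt_le_sqrt
    rw [div_le_iff₀ ha]
    nlinarith
  linarith [him]

lemma dichotomy (a b : ℝ) (ha : 0 < a) (hb : 0 < b) (w : ℂ → ℂ) (ζ : ℂ)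
    (hsq : w ζ ^ 2 = (a : ℂ) * ζ ^ 2 + b) :
    Real.sqrt a * ‖ζ‖ ≤ ‖w ζ + (Real.sqrt a : ℂ) * ζ‖ ∨
    ‖w ζ + (Real.sqrt a : ℂ) * ζ‖ * (Real.sqrt a * ‖ζ‖) ≤ b := by
  set r := Real.sqrt a with hrdef
  have hr2 : r ^ 2 = a := Real.sq_sqrt ha.le
  have hr0 : 0 < r := Real.sqrt_pos.2 ha
  have hrc : ((r : ℂ)) ^ 2 = (a : ℂ) := by rw [← Complex.ofReal_pow, hr2]
  set u := w ζ + (r : ℂ) * ζ with hu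
  set f := w ζ - (r : ℂ) * ζ with hf
  have hfu : f * u = (b : ℂ) := by
    rw [hf, hu]; linear_combination hsq - ζ ^ 2 * hrc
  have habs : ‖f‖ * ‖u‖ = b := by
    rw [← norm_mul, hfu, Complex.norm_of_nonneg hb.le]
  have hsum : 2 * (r * ‖ζ‖) ≤ ‖u‖ + ‖f‖ := by
    have h5 : ‖u - f‖ = 2 * (r * ‖ζ‖) := by
      rw [show u - f = 2 * (r : ℂ) * ζ by rw [hu, hf]; ring]
      rw [norm_mul, norm_mul, Complex.norm_two, Complex.norm_of_nonneg hr0.le]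
      ring
    calc 2 * (r * ‖ζ‖) = ‖u - f‖ := h5.symm
    _ ≤ ‖u‖ + ‖f‖ := by
        exact norm_sub_le u f
  rcases le_or_gt (r * ‖ζ‖) (‖u‖) with h | h
  · exact Or.inl h
  · right
    have hfge : r * ‖ζ‖ ≤ ‖f‖ := by linarith
    have := norm_nonneg u
    nlinarith

lemma u_lower_bound (a b : ℝ) (ha : 0 < a) (hb : 0 < b) (w : ℂ → ℂ)
    (hw : IsSqrtBranch a b w) (R : ℝ) (hR0 : 0 < R) (hR2 : 2 * b < a * R ^ 2) :
    ∀ ζ : ℂ, R < ‖ζ‖ → Real.sqrt a * ‖ζ‖ ≤ ‖w ζ + (Real.sqrt a : ℂ) * ζ‖ := by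
  set r := Real.sqrt a with hrdef
  have hr2 : r ^ 2 = a := Real.sq_sqrt ha.le
  have hr0 : 0 < r := Real.sqrt_pos.2 ha
  set C := {z : ℂ | R < ‖z‖} with hC
  have hCopen : IsOpen C := isOpen_lt continuous_const continuous_norm
  have hCsub : C ⊆ (slit a b)ᶜ := by
    intro ζ hζ hmem
    exact absurd (slit_subset_ball a b ha hb hR0 (by nlinarith) ζ hmem) (not_le.2 hζ)
  -- continuity of the gap function
  set g := fun z : ℂ => ‖w z + (r : ℂ) * z‖ - r * ‖z‖ / 2 with hg
  have hgC : ContinuousOn g C := by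
    apply ContinuousOn.sub
    · exact continuous_norm.comp_continuousOn
        ((hw.analytic.continuousOn.mono hCsub).add (Continuous.continuousOn (by continuity)))
    · exact Continuous.continuousOn (by continuity)
  set O1 := C ∩ g ⁻¹' (Set.Ioi 0) with hO1
  set O2 := C ∩ g ⁻¹' (Set.Iio 0) with hO2
  have hO1open : IsOpen O1 := hgC.isOpen_inter_preimage hCopen isOpen_Ioi
  have hO2open : IsOpen O2 := hgC.isOpen_inter_preimage hCopen isOpen_Iio
  have hdisj : Disjoint O1 O2 := by
    rw [Set.disjoint_left]
    rintro z ⟨_, h1⟩ ⟨_, h2⟩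
    simp only [Set.mem_preimage, Set.mem_Ioi] at h1
    simp only [Set.mem_preimage, Set.mem_Iio] at h2
    linarith
  have hcover : C ⊆ O1 ∪ O2 := by
    intro ζ hζ
    have hζR : R < ‖ζ‖ := hζ
    have hζpos : 0 < ‖ζ‖ := hR0.trans hζR
    rcases dichotomy a b ha hb w ζ (hw.sq ζ (hCsub hζ)) with h | h
    · left
      refine ⟨hζ, ?_⟩
      simp only [Set.mem_preimage, Set.mem_Ioi, hg]
      have : 0 < r * ‖ζ‖ := by positivity
      linarith
    · right
      refine ⟨hζ, ?_⟩
      simp only [Set.mem_preimage, Set.mem_Iio, hg]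
      have hub : ‖w ζ + (r : ℂ) * ζ‖ * (r * ‖ζ‖) ≤ b := h
      have hru : 0 < r * ‖ζ‖ := by positivity
      by_contra h'
      push_neg at h'
      have h' : r * ‖ζ‖ / 2 ≤ ‖w ζ + (r : ℂ) * ζ‖ := by linarith
      have h7 : (r * ‖ζ‖ / 2) * (r * ‖ζ‖) ≤ b :=
        le_trans (mul_le_mul_of_nonneg_right h' hru.le) hub
      have h8 : r ^ 2 * ‖ζ‖ ^ 2 = a * ‖ζ‖ ^ 2 := by rw [hr2]
      have h9 : R ^ 2 < ‖ζ‖ ^ 2 := by nlinarith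
      nlinarith [mul_lt_mul_of_pos_left h9 ha]
  -- nonempty: a large real point lies in O1
  obtain ⟨M, hM⟩ := hw.posLarge
  have hne : (C ∩ O1).Nonempty := by
    set x := max R M + 1 with hx
    clear_value x
    have hxR : R < x := by
      have := le_max_left R M; linarith
    have hxM : M < x := by
      have := le_max_right R M; linarith
    have hx0 : 0 < x := hR0.trans hxR
    have hxnorm : ‖(x : ℂ)‖ = x := by
      rw [Complex.norm_of_nonneg hx0.le]
    have hxC : (x : ℂ) ∈ C := by
      simp only [hC, Set.mem_setOf_eq, hxnorm]; exact hxR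
    refine ⟨(x : ℂ), hxC, hxC, ?_⟩
    simp only [Set.mem_preimage, Set.mem_Ioi, hg, hxnorm]
    have hre : (w (x : ℂ) + (r : ℂ) * (x : ℂ)).re = (w (x : ℂ)).re + r * x := by
      simp [Complex.add_re, Complex.mul_re, Complex.ofReal_re, Complex.ofReal_im]
    have h6 : r * x ≤ ‖w (x : ℂ) + (r : ℂ) * (x : ℂ)‖ := by
      calc r * x ≤ (w (x : ℂ)).re + r * x := by linarith [(hM x hxM).1]
      _ = (w (x : ℂ) + (r : ℂ) * (x : ℂ)).re := hre.symm
      _ ≤ |(w (x : ℂ) + (r : ℂ) * (x : ℂ)).re| := le_abs_self _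
      _ ≤ ‖w (x : ℂ) + (r : ℂ) * (x : ℂ)‖ := Complex.abs_re_le_norm _
    have : 0 < r * x := by positivity
    linarith
  have hsub : C ⊆ O1 :=
    (isPreconnected_norm_gt R hR0).subset_left_of_subset_union
      hO1open hO2open hdisj hcover hne
  intro ζ hζ
  have hζO1 : ζ ∈ O1 := hsub hζ
  have hgpos : r * ‖ζ‖ / 2 < ‖w ζ + (r : ℂ) * ζ‖ := by
    have := hζO1.2
    simp only [Set.mem_preimage, Set.mem_Ioi, hg] at this
    linarith
  rcases dichotomy a b ha hb w ζ (hw.sq ζ (hCsub hζ)) with h | h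
  · exact h
  · exfalso
    have hζpos : 0 < ‖ζ‖ := hR0.trans hζ
    have hub : ‖w ζ + (r : ℂ) * ζ‖ * (r * ‖ζ‖) ≤ b := h
    have hru : 0 < r * ‖ζ‖ := by positivity
    have h7 : (r * ‖ζ‖ / 2) * (r * ‖ζ‖) ≤ b :=
      le_trans (mul_le_mul_of_nonneg_right hgpos.le hru.le) hub
    have h8 : r ^ 2 * ‖ζ‖ ^ 2 = a * ‖ζ‖ ^ 2 := by rw [hr2]
    have h9 : R ^ 2 < ‖ζ‖ ^ 2 := by nlinarith
    nlinarith [mul_lt_mul_of_pos_left h9 ha]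


set_option maxHeartbeats 1600000 in
theorem sign_of_v_near_zero_and_infinity (a b lam : ℝ) (ha : 0 < a) (hb : 0 < b)
    (hlam₁ : -Real.sqrt a < lam) (hlam₂ : lam < 0)
    (w : ℂ → ℂ) (hw : IsSqrtBranch a b w) :
    ∃ ε > (0 : ℝ), ∃ R : ℝ,
      (∀ ζ : ℂ, R < ‖ζ‖ → ζ.im ≠ 0 → 0 < (w ζ + (lam : ℂ) * ζ).im / ζ.im) ∧
      (∀ ζ : ℂ, ζ ∉ slit a b → ‖ζ‖ < ε → ζ.im ≠ 0 →
        (w ζ + (lam : ℂ) * ζ).im / ζ.im < 0) := by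
  set r := Real.sqrt a with hrdef
  have hr2 : r ^ 2 = a := Real.sq_sqrt ha.le
  have hr0 : 0 < r := Real.sqrt_pos.2 ha
  have hrl : 0 < r + lam := by linarith
  set C := 2 * a + 2 * r * Real.sqrt (a + b) with hCdef
  have hC0 : 0 < C := by positivity
  set ε := min 1 ((-b * lam) / ((C + 1) * (r + lam))) with hεdef
  have hden : 0 < (C + 1) * (r + lam) := by positivity
  have hε0 : 0 < ε := by
    apply lt_min one_pos
    apply div_pos (by nlinarith) hden
  set q := (b * (r - lam)) / (a * (r + lam)) + 2 * b / a + 1 with hqdef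
  have hq0 : 0 ≤ q := by
    have h1 : 0 < b * (r - lam) := mul_pos hb (by linarith)
    have h2 : 0 < a * (r + lam) := mul_pos ha hrl
    have h3 := div_pos h1 h2
    have h4 : 0 < 2 * b / a := by positivity
    rw [hqdef]
    linarith
  set R := Real.sqrt q + 1 with hRdef
  have hR0 : 0 < R := by positivity
  have hRsq : q < R ^ 2 := by
    have h1 : Real.sqrt q ^ 2 = q := Real.sq_sqrt hq0
    nlinarith [Real.sqrt_nonneg q]
  have haq2 : a * q * (r + lam) = b * (r - lam) + (2 * b + a) * (r + lam) := by
    rw [hqdef]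
    field_simp [ha.ne', hrl.ne']
    ring
  have hkey : b * (r - lam) < a * R ^ 2 * (r + lam) := by
    have h1 : a * q < a * R ^ 2 := mul_lt_mul_of_pos_left hRsq ha
    have h2 : a * q * (r + lam) < a * R ^ 2 * (r + lam) :=
      mul_lt_mul_of_pos_right h1 hrl
    nlinarith [mul_pos (by linarith : (0:ℝ) < 2 * b + a) hrl]
  have h2bR : 2 * b < a * R ^ 2 := by
    have h10 : 0 < (a * q - 2 * b) * (r + lam) := by
      have hbr : 0 < b * r := mul_pos hb hr0
      have hbl : 0 < b * (-lam) := mul_pos hb (by linarith)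
      have har : 0 < a * (r + lam) := mul_pos ha hrl
      nlinarith [haq2]
    have h11 : 2 * b < a * q := by
      by_contra hcon
      push_neg at hcon
      nlinarith [h10]
    nlinarith [mul_lt_mul_of_pos_left hRsq ha]
  have hε1 : ε ≤ 1 := min_le_left _ _
  have hε2 : ε ≤ (-b * lam) / ((C + 1) * (r + lam)) := min_le_right _ _
  clear_value ε q R C
  clear hεdef hqdef hRdef hRsq haq2
  refine ⟨ε, hε0, R, ?_, ?_⟩
  · -- near infinity
    intro ζ hζ him
    have hζmem : ζ ∈ (slit a b)ᶜ := by
      intro hmem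
      exact absurd (slit_subset_ball a b ha hb hR0 (by linarith) ζ hmem) (not_le.2 hζ)
    have hsq : w ζ ^ 2 = (a : ℂ) * ζ ^ 2 + b := hw.sq ζ hζmem
    rw [key_ratio a b lam ha hb ζ (w ζ) hsq him]
    set s := Complex.normSq (w ζ + (r : ℂ) * ζ) with hsdef
    have hs0 : 0 ≤ s := Complex.normSq_nonneg _
    have hsb : 0 < s + b := by linarith
    have hlb : r * ‖ζ‖ ≤ ‖w ζ + (r : ℂ) * ζ‖ :=
      u_lower_bound a b ha hb w hw R hR0 h2bR ζ hζ
    have hs_eq : s = ‖w ζ + (r : ℂ) * ζ‖ ^ 2 := (Complex.sq_norm _).symm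
    have h9 : R ^ 2 < ‖ζ‖ ^ 2 := by nlinarith [norm_nonneg ζ]
    have h8 : r ^ 2 * ‖ζ‖ ^ 2 = a * ‖ζ‖ ^ 2 := by rw [hr2]
    have hs1 : a * R ^ 2 < s := by
      have hp : (r * ‖ζ‖) ^ 2 ≤ ‖w ζ + (r : ℂ) * ζ‖ ^ 2 := by
        apply pow_le_pow_left₀ (by positivity) hlb
      nlinarith [mul_lt_mul_of_pos_left h9 ha]
    have hnum : 0 < r * (s - b) + lam * (s + b) := by
      nlinarith [mul_lt_mul_of_pos_right hs1 hrl]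
    rw [div_add' _ _ _ hsb.ne']
    exact div_pos hnum hsb
  · -- near zero
    intro ζ hζ hζε him
    have hζmem : ζ ∈ (slit a b)ᶜ := hζ
    have hsq : w ζ ^ 2 = (a : ℂ) * ζ ^ 2 + b := hw.sq ζ hζmem
    rw [key_ratio a b lam ha hb ζ (w ζ) hsq him]
    set s := Complex.normSq (w ζ + (r : ℂ) * ζ) with hsdef
    have hs0 : 0 ≤ s := Complex.normSq_nonneg _
    have hsb : 0 < s + b := by linarith
    have hζ1 : ‖ζ‖ ≤ 1 := le_of_lt (lt_of_lt_of_le hζε hε1)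
    have hsmall : s ≤ b + C * ‖ζ‖ := by
      rw [hCdef]
      exact normSq_u_small a b ha hb ζ (w ζ) hsq hζ1
    have hζε2 : ‖ζ‖ < (-b * lam) / ((C + 1) * (r + lam)) :=
      lt_of_lt_of_le hζε hε2
    have hmul : ‖ζ‖ * ((C + 1) * (r + lam)) < -b * lam :=
      (lt_div_iff₀ hden).mp hζε2
    have hnum : r * (s - b) + lam * (s + b) < 0 := by
      nlinarith [mul_le_mul_of_nonneg_right hsmall hrl.le,
        mul_nonneg (norm_nonneg ζ) hrl.le, mul_pos hb (neg_pos.2 hlam₂),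
        mul_nonneg (mul_nonneg (norm_nonneg ζ) hC0.le) hrl.le]
    rw [div_add' _ _ _ hsb.ne']
    exact div_neg_of_neg_of_pos hnum hsb
end
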